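/- arXiv:1603.08281 — 4 statements merged into one kernel-verified Lean document; each statement's English description precedes it below -/
import Mathlib

section
/- If z, w ∈ (ℂ*)^m lie on the same ℝ₊^m-orbit, z_j = exp(ρ₁ⱼ/2 + i·θⱼ), w_j = exp(ρ₂ⱼ/2 + i·θⱼ), then the Berezin kernel is given exactly by P(z,w) = B(ζ,ζ) / (B(z*,z*)·B(w*,w*))^{1/2}, where ζ_j = exp((ρ₁ⱼ+ρ₂ⱼ)/4), z*_j = exp(ρ₁ⱼ/2) and w*_j = exp(ρ₂ⱼ/2). In particular the Berezin kernel between same-orbit points is expressed entirely through diagonal values of the Bergman kernel. -/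
open Complex Finset ComplexConjugate

/-- The monomial `z^α = ∏ j, z_j^{α_j}` with integer exponents. -/
noncomputable def mpow {m : ℕ} (z : Fin m → ℂ) (α : Fin m → ℤ) : ℂ :=
  ∏ j, (z j) ^ (α j)

/-- The toric Bergman kernel in the toric frame:
`B(z,w) = Σ_{α ∈ S} z^α ⬝ conj(w)^α / Q(α)`. -/
noncomputable def Bker {m : ℕ} (S : Finset (Fin m → ℤ)) (Q : (Fin m → ℤ) → ℝ)
    (z w : Fin m → ℂ) : ℂ :=
  ∑ α ∈ S, mpow z α * conj (mpow w α) / (Q α : ℂ)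

/-- The Berezin (normalized Szegő) kernel `P(z,w) = |B(z,w)|/(B(z,z)B(w,w))^{1/2}`;
the diagonal values of `B` are positive reals, so `P` is well defined. -/
noncomputable def Pker {m : ℕ} (S : Finset (Fin m → ℤ)) (Q : (Fin m → ℤ) → ℝ)
    (z w : Fin m → ℂ) : ℝ :=
  ‖Bker S Q z w‖ / Real.sqrt ((Bker S Q z z).re * (Bker S Q w w).re)

lemma term_key (n : ℤ) (a b t : ℝ) :
    (Complex.exp ((a:ℂ) + (t:ℂ) * Complex.I)) ^ n *
      (starRingEnd ℂ) (Complex.exp ((b:ℂ) + (t:ℂ) * Complex.I)) ^ n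
      = Complex.exp ((n : ℂ) * ((a:ℂ) + (b:ℂ))) := by
  rw [← Complex.exp_conj, ← Complex.exp_int_mul, ← Complex.exp_int_mul, ← Complex.exp_add]
  congr 1
  simp only [map_add, map_mul, Complex.conj_ofReal, Complex.conj_I]
  ring

lemma Bker_real_form {m : ℕ} (S : Finset (Fin m → ℤ)) (Q : (Fin m → ℤ) → ℝ)
    (a b t : Fin m → ℝ) (z w : Fin m → ℂ)
    (hz : ∀ j, z j = Complex.exp ((a j : ℂ) + (t j : ℂ) * Complex.I))
    (hw : ∀ j, w j = Complex.exp ((b j : ℂ) + (t j : ℂ) * Complex.I)) :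
    Bker S Q z w = ((∑ α ∈ S, Real.exp (∑ j, α j * (a j + b j)) / Q α : ℝ) : ℂ) := by
  unfold Bker mpow
  push_cast
  refine Finset.sum_congr rfl fun α _ => ?_
  congr 1
  rw [map_prod, ← Finset.prod_mul_distrib]
  have h : ∀ j ∈ Finset.univ, z j ^ α j * (starRingEnd ℂ) (w j ^ α j)
      = Complex.exp ((α j : ℂ) * ((a j : ℂ) + (b j : ℂ))) := by
    intro j _
    rw [hz j, hw j, map_zpow₀]
    exact term_key (α j) (a j) (b j) (t j)
  rw [Finset.prod_congr rfl h, ← Complex.exp_sum]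

/-- if `z, w` lie on the same `ℝ₊^m`-orbit, then
`P(z,w) = B(ζ,ζ)/(B(z*,z*)·B(w*,w*))^{1/2}` where `ζ` is the `ℝ₊^m`-midpoint
`ζ_j = exp((ρ₁ⱼ+ρ₂ⱼ)/4)` and `z*, w*` are the `ℝ₊^m`-orbit representatives; so the
Berezin kernel between same-orbit points is expressed through diagonal values of `B`. -/
theorem berezin_same_orbit_formula_through_diagonal
    (m : ℕ) (hm : 1 ≤ m)
    (S : Finset (Fin m → ℤ)) (hS : S.Nonempty)
    (Q : (Fin m → ℤ) → ℝ) (hQ : ∀ α ∈ S, 0 < Q α)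
    (ρ₁ ρ₂ θ : Fin m → ℝ) (z w ζ zstar wstar : Fin m → ℂ)
    (hz : ∀ j, z j = Complex.exp ((ρ₁ j / 2 : ℝ) + (θ j : ℝ) * Complex.I))
    (hw : ∀ j, w j = Complex.exp ((ρ₂ j / 2 : ℝ) + (θ j : ℝ) * Complex.I))
    (hζ : ∀ j, ζ j = Complex.exp (((ρ₁ j + ρ₂ j) / 4 : ℝ)))
    (hzstar : ∀ j, zstar j = Complex.exp ((ρ₁ j / 2 : ℝ)))
    (hwstar : ∀ j, wstar j = Complex.exp ((ρ₂ j / 2 : ℝ))) :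
    Pker S Q z w
      = (Bker S Q ζ ζ).re
        / Real.sqrt ((Bker S Q zstar zstar).re * (Bker S Q wstar wstar).re) := by
  have hz' : ∀ j, z j = Complex.exp (((fun j => ρ₁ j / 2) j : ℂ) + (θ j : ℂ) * Complex.I) :=
    fun j => hz j
  have hw' : ∀ j, w j = Complex.exp (((fun j => ρ₂ j / 2) j : ℂ) + (θ j : ℂ) * Complex.I) :=
    fun j => hw j
  have hζ' : ∀ j, ζ j = Complex.exp (((fun j => (ρ₁ j + ρ₂ j) / 4) j : ℂ)
      + (((fun _ : Fin m => (0:ℝ)) j : ℝ) : ℂ) * Complex.I) := by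
    intro j; rw [hζ j]; norm_num
  have hzstar' : ∀ j, zstar j = Complex.exp (((fun j => ρ₁ j / 2) j : ℂ)
      + (((fun _ : Fin m => (0:ℝ)) j : ℝ) : ℂ) * Complex.I) := by
    intro j; rw [hzstar j]; norm_num
  have hwstar' : ∀ j, wstar j = Complex.exp (((fun j => ρ₂ j / 2) j : ℂ)
      + (((fun _ : Fin m => (0:ℝ)) j : ℝ) : ℂ) * Complex.I) := by
    intro j; rw [hwstar j]; norm_num
  have e1 := Bker_real_form S Q _ _ _ z w hz' hw'
  have e2 := Bker_real_form S Q _ _ _ ζ ζ hζ' hζ'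
  have e3 := Bker_real_form S Q _ _ _ zstar zstar hzstar' hzstar'
  have e4 := Bker_real_form S Q _ _ _ wstar wstar hwstar' hwstar'
  have e5 := Bker_real_form S Q _ _ _ z z hz' hz'
  have e6 := Bker_real_form S Q _ _ _ w w hw' hw'
  have hmd : (∑ α ∈ S, Real.exp (∑ j, (α j : ℝ) *
        ((ρ₁ j + ρ₂ j) / 4 + (ρ₁ j + ρ₂ j) / 4)) / Q α)
      = ∑ α ∈ S, Real.exp (∑ j, (α j : ℝ) * (ρ₁ j / 2 + ρ₂ j / 2)) / Q α := by
    refine Finset.sum_congr rfl fun α _ => ?_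
    have h : (∑ j, (α j : ℝ) * ((ρ₁ j + ρ₂ j) / 4 + (ρ₁ j + ρ₂ j) / 4))
        = ∑ j, (α j : ℝ) * (ρ₁ j / 2 + ρ₂ j / 2) :=
      Finset.sum_congr rfl fun j _ => by ring
    rw [h]
  have hE1 : 0 ≤ ∑ α ∈ S, Real.exp (∑ j, (α j : ℝ) * (ρ₁ j / 2 + ρ₂ j / 2)) / Q α :=
    Finset.sum_nonneg fun α hα => div_nonneg (Real.exp_nonneg _) (hQ α hα).le
  unfold Pker
  rw [e1, e2, e3, e4, e5, e6, hmd]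
  simp only [Complex.norm_real, Real.norm_eq_abs, Complex.ofReal_re]
  rw [_root_.abs_of_nonneg hE1]
end

section
/- Fix ρ₁, ρ₂, θ ∈ ℝ^m and let z_k = z and w_k = w be the fixed points with coordinates z_j = exp(ρ₁ⱼ/2 + i·θⱼ), w_j = exp(ρ₂ⱼ/2 + i·θⱼ) (the same ℝ₊^m-orbit). Assume the diagonal asymptotics hypothesis holds for each of the three vectors ρ ∈ {ρ₁, ρ₂, (ρ₁+ρ₂)/2}, i.e. (1/k)·log B_k(e^{ρ/2}, e^{ρ/2}) → φ̃(ρ) as k → ∞. Then the pointwise limit exists: (1/k)·log P_k(z,w) → φ̃((ρ₁+ρ₂)/2) − (φ̃(ρ₁) + φ̃(ρ₂))/2 as k → ∞. (This limit equals minus one half of the Calabi diastasis D(z,w) between the same-orbit points z and w.) -/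
open Complex Finset ComplexConjugate Filter

/-- On a common torus orbit the Bergman kernel is a positive-real sum of exponentials. -/
lemma Bker_orbit {m : ℕ} (S : Finset (Fin m → ℤ)) (Q : (Fin m → ℤ) → ℝ)
    (a b θ : Fin m → ℝ) (z w : Fin m → ℂ)
    (hz : ∀ j, z j = Complex.exp ((a j : ℝ) + (θ j : ℝ) * Complex.I))
    (hw : ∀ j, w j = Complex.exp ((b j : ℝ) + (θ j : ℝ) * Complex.I)) :
    Bker S Q z w = ((∑ α ∈ S, Real.exp (∑ j, α j * (a j + b j)) / Q α : ℝ) : ℂ) := by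
  unfold Bker
  push_cast
  refine Finset.sum_congr rfl fun α _ => ?_
  have h1 : mpow z α = Complex.exp (∑ j, (α j : ℂ) * ((a j : ℝ) + (θ j : ℝ) * Complex.I)) := by
    rw [Complex.exp_sum]
    exact Finset.prod_congr rfl fun j _ => by rw [hz j, ← Complex.exp_int_mul]
  have h2 : conj (mpow w α)
      = Complex.exp (∑ j, (α j : ℂ) * ((b j : ℝ) - (θ j : ℝ) * Complex.I)) := by
    unfold mpow
    rw [map_prod, Complex.exp_sum]
    refine Finset.prod_congr rfl fun j _ => ?_
    rw [hw j, ← Complex.exp_int_mul, ← Complex.exp_conj]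
    congr 1
    simp [mul_comm]
    ring
  rw [h1, h2, ← Complex.exp_add, ← Finset.sum_add_distrib]
  congr 1
  congr 1
  exact Finset.sum_congr rfl fun j _ => by ring

/-- if `z, w` lie on the same `ℝ₊^m`-orbit and the Tian–Zelditch diagonal
asymptotics `(1/k)·log B_k(e^{ρ/2},e^{ρ/2}) → φ̃(ρ)` hold for `ρ ∈ {ρ₁, ρ₂, (ρ₁+ρ₂)/2}`,
then the pointwise limit exists:
`(1/k)·log P_k(z,w) → φ̃((ρ₁+ρ₂)/2) − (φ̃(ρ₁)+φ̃(ρ₂))/2`,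
i.e. minus one half of the Calabi diastasis between `z` and `w`. -/
theorem berezin_same_orbit_pointwise_limit
    (m : ℕ) (hm : 1 ≤ m)
    (S : ℕ → Finset (Fin m → ℤ)) (hS : ∀ k, (S k).Nonempty)
    (Q : ℕ → (Fin m → ℤ) → ℝ) (hQ : ∀ k, ∀ α ∈ S k, 0 < Q k α)
    (φ : (Fin m → ℝ) → ℝ)
    (ρ₁ ρ₂ θ : Fin m → ℝ) (z w : Fin m → ℂ)
    (hz : ∀ j, z j = Complex.exp ((ρ₁ j / 2 : ℝ) + (θ j : ℝ) * Complex.I))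
    (hw : ∀ j, w j = Complex.exp ((ρ₂ j / 2 : ℝ) + (θ j : ℝ) * Complex.I))
    (hdiag : ∀ ρ ∈ ({ρ₁, ρ₂, fun j => (ρ₁ j + ρ₂ j) / 2} : Set (Fin m → ℝ)),
      Tendsto (fun k : ℕ => (1 / (k : ℝ)) * Real.log
          ((Bker (S k) (Q k) (fun j => (Real.exp (ρ j / 2) : ℂ))
            (fun j => (Real.exp (ρ j / 2) : ℂ))).re))
        atTop (nhds (φ ρ))) :
    Tendsto (fun k : ℕ => (1 / (k : ℝ)) * Real.log (Pker (S k) (Q k) z w))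
      atTop (nhds (φ (fun j => (ρ₁ j + ρ₂ j) / 2) - (φ ρ₁ + φ ρ₂) / 2)) := by
  set ρm : Fin m → ℝ := fun j => (ρ₁ j + ρ₂ j) / 2 with hρm
  set F : (Fin m → ℝ) → ℕ → ℝ :=
    fun ρ k => ∑ α ∈ S k, Real.exp (∑ j, α j * ρ j) / Q k α with hF
  have Fpos : ∀ ρ k, 0 < F ρ k := fun ρ k =>
    Finset.sum_pos (fun α hα => div_pos (Real.exp_pos _) (hQ k α hα)) (hS k)
  have key : ∀ (ρ : Fin m → ℝ) (k : ℕ),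
      Bker (S k) (Q k) (fun j => (Real.exp (ρ j / 2) : ℂ))
        (fun j => (Real.exp (ρ j / 2) : ℂ)) = ((F ρ k : ℝ) : ℂ) := by
    intro ρ k
    rw [Bker_orbit (S k) (Q k) (fun j => ρ j / 2) (fun j => ρ j / 2) (fun _ => 0)
      _ _ (fun j => by simp) (fun j => by simp)]
    simp [hF, add_halves]
  have hBzw : ∀ k, Bker (S k) (Q k) z w = ((F ρm k : ℝ) : ℂ) := by
    intro k
    rw [Bker_orbit (S k) (Q k) (fun j => ρ₁ j / 2) (fun j => ρ₂ j / 2) θ z w hz hw]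
    congr 1
    refine Finset.sum_congr rfl fun α _ => ?_
    congr 1
    congr 1
    exact Finset.sum_congr rfl fun j _ => by simp only [hρm]; ring
  have hBzz : ∀ k, Bker (S k) (Q k) z z = ((F ρ₁ k : ℝ) : ℂ) := by
    intro k
    rw [Bker_orbit (S k) (Q k) (fun j => ρ₁ j / 2) (fun j => ρ₁ j / 2) θ z z hz hz]
    congr 1
    refine Finset.sum_congr rfl fun α _ => ?_
    congr 1
    congr 1
    exact Finset.sum_congr rfl fun j _ => by rw [add_halves]
  have hBww : ∀ k, Bker (S k) (Q k) w w = ((F ρ₂ k : ℝ) : ℂ) := by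
    intro k
    rw [Bker_orbit (S k) (Q k) (fun j => ρ₂ j / 2) (fun j => ρ₂ j / 2) θ w w hw hw]
    congr 1
    refine Finset.sum_congr rfl fun α _ => ?_
    congr 1
    congr 1
    exact Finset.sum_congr rfl fun j _ => by rw [add_halves]
  have hP : ∀ k, Pker (S k) (Q k) z w = F ρm k / Real.sqrt (F ρ₁ k * F ρ₂ k) := by
    intro k
    unfold Pker
    rw [hBzw k, hBzz k, hBww k]
    simp [Complex.norm_real, Real.norm_eq_abs, abs_of_pos (Fpos ρm k)]
  have hlog : ∀ k, Real.log (Pker (S k) (Q k) z w)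
      = Real.log (F ρm k) - (Real.log (F ρ₁ k) + Real.log (F ρ₂ k)) / 2 := by
    intro k
    rw [hP k, Real.log_div (Fpos ρm k).ne'
      (Real.sqrt_ne_zero'.2 (mul_pos (Fpos ρ₁ k) (Fpos ρ₂ k))),
      Real.log_sqrt (mul_pos (Fpos ρ₁ k) (Fpos ρ₂ k)).le,
      Real.log_mul (Fpos ρ₁ k).ne' (Fpos ρ₂ k).ne']
  have hd : ∀ ρ ∈ ({ρ₁, ρ₂, ρm} : Set (Fin m → ℝ)),
      Tendsto (fun k : ℕ => (1 / (k : ℝ)) * Real.log (F ρ k)) atTop (nhds (φ ρ)) := by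
    intro ρ hρ
    refine (hdiag ρ hρ).congr fun k => ?_
    rw [key ρ k, Complex.ofReal_re]
  have h1 := hd ρ₁ (by left; rfl)
  have h2 := hd ρ₂ (by right; left; rfl)
  have hmid := hd ρm (by right; right; rfl)
  have := hmid.sub ((h1.add h2).div_const 2)
  refine this.congr fun k => ?_
  rw [hlog k]
  ring
end

section
/- Fix ρ₁, ρ₂, θ₁, θ₂ ∈ ℝ^m and let z, w be the points with coordinates z_j = exp(ρ₁ⱼ/2 + i·θ₁ⱼ), w_j = exp(ρ₂ⱼ/2 + i·θ₂ⱼ) (arbitrary points of the open orbit). Assume the diagonal asymptotics hypothesis for each ρ ∈ {ρ₁, ρ₂, (ρ₁+ρ₂)/2}, i.e. (1/k)·log B_k(e^{ρ/2}, e^{ρ/2}) → φ̃(ρ) as k → ∞. Then limsup_{k→∞} (1/k)·log P_k(z,w) ≤ φ̃((ρ₁+ρ₂)/2) − (φ̃(ρ₁) + φ̃(ρ₂))/2, and if φ̃ is convex this upper bound is ≤ 0. (The bound equals minus one half of the Calabi diastasis D(z*,w*) between the ℝ₊^m-orbit representatives of z and w.) -/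
open Complex Finset ComplexConjugate Filter

private lemma abs_mpow_eq {m : ℕ} (z : Fin m → ℂ) (ρ : Fin m → ℝ)
    (hz : ∀ j, ‖z j‖ = Real.exp (ρ j / 2)) (α : Fin m → ℤ) :
    ‖mpow z α‖ = ∏ j, Real.exp (ρ j / 2) ^ (α j) := by
  rw [mpow, norm_prod]
  exact Finset.prod_congr rfl fun j _ => by rw [norm_zpow, hz j]

private lemma half_prod {m : ℕ} (ρ σ : Fin m → ℝ) (α : Fin m → ℤ) :
    (∏ j, Real.exp (ρ j / 2) ^ (α j)) * (∏ j, Real.exp (σ j / 2) ^ (α j))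
      = ∏ j, Real.exp ((ρ j + σ j) / 2) ^ (α j) := by
  rw [← Finset.prod_mul_distrib]
  refine Finset.prod_congr rfl fun j _ => ?_
  rw [← mul_zpow, ← Real.exp_add]
  ring_nf

private lemma diag_re {m : ℕ} (S : Finset (Fin m → ℤ)) (Q : (Fin m → ℤ) → ℝ)
    (z : Fin m → ℂ) (ρ : Fin m → ℝ)
    (hz : ∀ j, ‖z j‖ = Real.exp (ρ j / 2)) :
    (Bker S Q z z).re = ∑ α ∈ S, (∏ j, Real.exp (ρ j) ^ (α j)) / Q α := by
  rw [Bker, Complex.re_sum]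
  refine Finset.sum_congr rfl fun α _ => ?_
  have h1 : mpow z α * conj (mpow z α) / (Q α : ℂ)
      = (((∏ j, Real.exp (ρ j) ^ (α j)) / Q α : ℝ) : ℂ) := by
    rw [Complex.mul_conj, Complex.normSq_eq_norm_sq, sq, abs_mpow_eq z ρ hz α, half_prod]
    have : ∀ j, (ρ j + ρ j) / 2 = ρ j := fun j => by ring
    push_cast
    simp [this]
  rw [h1, Complex.ofReal_re]

private lemma Bker_abs_le {m : ℕ} (S : Finset (Fin m → ℤ)) (Q : (Fin m → ℤ) → ℝ)
    (hQ : ∀ α ∈ S, 0 < Q α)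
    (z w : Fin m → ℂ) (ρ σ : Fin m → ℝ)
    (hz : ∀ j, ‖z j‖ = Real.exp (ρ j / 2))
    (hw : ∀ j, ‖w j‖ = Real.exp (σ j / 2)) :
    ‖Bker S Q z w‖
      ≤ ∑ α ∈ S, (∏ j, Real.exp ((ρ j + σ j) / 2) ^ (α j)) / Q α := by
  refine le_trans (norm_sum_le _ _) (le_of_eq ?_)
  refine Finset.sum_congr rfl fun α hα => ?_
  rw [norm_div, norm_mul, Complex.norm_conj, Complex.norm_real, Real.norm_eq_abs,
    abs_of_pos (hQ α hα), abs_mpow_eq z ρ hz α, abs_mpow_eq w σ hw α, half_prod]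

/-- for arbitrary points `z, w` of the open orbit, assuming the diagonal
asymptotics for `ρ ∈ {ρ₁, ρ₂, (ρ₁+ρ₂)/2}`, one has
`limsup_{k→∞} (1/k)·log P_k(z,w) ≤ φ̃((ρ₁+ρ₂)/2) − (φ̃(ρ₁)+φ̃(ρ₂))/2`
(stated equivalently, since `P_k ≥ 0` may vanish and `log 0 = -∞`, as: for every
`ε > 0`, eventually `P_k(z,w) ≤ exp(k·(bound + ε))`), and if `φ̃` is convex the
bound is `≤ 0`.  The bound is minus one half of the diastasis `D(z*,w*)`. -/
theorem berezin_offdiag_limsup_le_diastasis_bound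
    (m : ℕ) (hm : 1 ≤ m)
    (S : ℕ → Finset (Fin m → ℤ)) (hS : ∀ k, (S k).Nonempty)
    (Q : ℕ → (Fin m → ℤ) → ℝ) (hQ : ∀ k, ∀ α ∈ S k, 0 < Q k α)
    (φ : (Fin m → ℝ) → ℝ)
    (ρ₁ ρ₂ θ₁ θ₂ : Fin m → ℝ) (z w : Fin m → ℂ)
    (hz : ∀ j, z j = Complex.exp ((ρ₁ j / 2 : ℝ) + (θ₁ j : ℝ) * Complex.I))
    (hw : ∀ j, w j = Complex.exp ((ρ₂ j / 2 : ℝ) + (θ₂ j : ℝ) * Complex.I))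
    (hdiag : ∀ ρ ∈ ({ρ₁, ρ₂, fun j => (ρ₁ j + ρ₂ j) / 2} : Set (Fin m → ℝ)),
      Tendsto (fun k : ℕ => (1 / (k : ℝ)) * Real.log
          ((Bker (S k) (Q k) (fun j => (Real.exp (ρ j / 2) : ℂ))
            (fun j => (Real.exp (ρ j / 2) : ℂ))).re))
        atTop (nhds (φ ρ))) :
    (∀ ε > (0 : ℝ), ∀ᶠ k : ℕ in atTop,
      Pker (S k) (Q k) z w
        ≤ Real.exp ((k : ℝ) *
            ((φ (fun j => (ρ₁ j + ρ₂ j) / 2) - (φ ρ₁ + φ ρ₂) / 2) + ε)))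
    ∧ (ConvexOn ℝ Set.univ φ →
        φ (fun j => (ρ₁ j + ρ₂ j) / 2) - (φ ρ₁ + φ ρ₂) / 2 ≤ 0) := by
  set ρm : Fin m → ℝ := fun j => (ρ₁ j + ρ₂ j) / 2 with hρm
  -- the real diagonal sums
  set D : (Fin m → ℝ) → ℕ → ℝ :=
    fun ρ k => ∑ α ∈ S k, (∏ j, Real.exp (ρ j) ^ (α j)) / Q k α with hD
  have hDpos : ∀ ρ k, 0 < D ρ k := by
    intro ρ k
    refine Finset.sum_pos (fun α hα => div_pos ?_ (hQ k α hα)) (hS k)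
    exact Finset.prod_pos fun j _ => zpow_pos (Real.exp_pos _) _
  -- abs of z, w coordinates
  have habsz : ∀ j, ‖z j‖ = Real.exp (ρ₁ j / 2) := by
    intro j; rw [hz j, Complex.norm_exp]; norm_num
  have habsw : ∀ j, ‖w j‖ = Real.exp (ρ₂ j / 2) := by
    intro j; rw [hw j, Complex.norm_exp]; norm_num
  -- diagonal Bergman kernels equal D
  have hreal : ∀ (ρ : Fin m → ℝ) (j : Fin m),
      ‖((Real.exp (ρ j / 2) : ℂ))‖ = Real.exp (ρ j / 2) := by
    intro ρ j; rw [Complex.norm_real, Real.norm_eq_abs, abs_of_pos (Real.exp_pos _)]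
  have hBD : ∀ (ρ : Fin m → ℝ) (k : ℕ),
      (Bker (S k) (Q k) (fun j => (Real.exp (ρ j / 2) : ℂ))
        (fun j => (Real.exp (ρ j / 2) : ℂ))).re = D ρ k := by
    intro ρ k; exact diag_re _ _ _ ρ (hreal ρ)
  have hzz : ∀ k, (Bker (S k) (Q k) z z).re = D ρ₁ k :=
    fun k => diag_re _ _ z ρ₁ habsz
  have hww : ∀ k, (Bker (S k) (Q k) w w).re = D ρ₂ k :=
    fun k => diag_re _ _ w ρ₂ habsw
  have hoff : ∀ k, ‖Bker (S k) (Q k) z w‖ ≤ D ρm k :=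
    fun k => Bker_abs_le (S k) (Q k) (hQ k) z w ρ₁ ρ₂ habsz habsw
  -- the limit statements for D
  have hL : ∀ ρ ∈ ({ρ₁, ρ₂, ρm} : Set (Fin m → ℝ)),
      Tendsto (fun k : ℕ => (1 / (k : ℝ)) * Real.log (D ρ k)) atTop (nhds (φ ρ)) := by
    intro ρ hρ
    have := hdiag ρ hρ
    simpa only [hBD] using this
  have hL1 := hL ρ₁ (by simp)
  have hL2 := hL ρ₂ (by simp)
  have hLm := hL ρm (by right; right; rfl)
  constructor
  · intro ε hε
    set b : ℝ := φ ρm - (φ ρ₁ + φ ρ₂) / 2 with hb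
    have hu : Tendsto (fun k : ℕ => (1 / (k : ℝ)) * Real.log (D ρm k)
        - ((1 / (k : ℝ)) * Real.log (D ρ₁ k) + (1 / (k : ℝ)) * Real.log (D ρ₂ k)) / 2)
        atTop (nhds b) := by
      have := hLm.sub ((hL1.add hL2).div_const 2)
      simpa using this
    have hev : ∀ᶠ k : ℕ in atTop,
        (1 / (k : ℝ)) * Real.log (D ρm k)
          - ((1 / (k : ℝ)) * Real.log (D ρ₁ k) + (1 / (k : ℝ)) * Real.log (D ρ₂ k)) / 2
          < b + ε := hu.eventually_lt_const (by linarith)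
    filter_upwards [hev, Filter.eventually_ge_atTop 1] with k hk hk1
    have hk0 : (0 : ℝ) < (k : ℝ) := by exact_mod_cast hk1
    have hD1 := hDpos ρ₁ k
    have hD2 := hDpos ρ₂ k
    have hDm := hDpos ρm k
    have hsqrtpos : 0 < Real.sqrt (D ρ₁ k * D ρ₂ k) :=
      Real.sqrt_pos.mpr (mul_pos hD1 hD2)
    have hP : Pker (S k) (Q k) z w ≤ D ρm k / Real.sqrt (D ρ₁ k * D ρ₂ k) := by
      rw [Pker, hzz, hww]
      gcongr
      exact hoff k
    have hsqrt : Real.sqrt (D ρ₁ k * D ρ₂ k)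
        = Real.exp ((Real.log (D ρ₁ k) + Real.log (D ρ₂ k)) / 2) := by
      rw [Real.exp_half, Real.exp_add, Real.exp_log hD1, Real.exp_log hD2]
    have harg : (k : ℝ) * ((1 / (k : ℝ)) * Real.log (D ρm k)
          - ((1 / (k : ℝ)) * Real.log (D ρ₁ k) + (1 / (k : ℝ)) * Real.log (D ρ₂ k)) / 2)
        = Real.log (D ρm k) - (Real.log (D ρ₁ k) + Real.log (D ρ₂ k)) / 2 := by
      field_simp
    have hkey : D ρm k / Real.sqrt (D ρ₁ k * D ρ₂ k)
        = Real.exp ((k : ℝ) * ((1 / (k : ℝ)) * Real.log (D ρm k)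
            - ((1 / (k : ℝ)) * Real.log (D ρ₁ k) + (1 / (k : ℝ)) * Real.log (D ρ₂ k)) / 2)) := by
      rw [harg, Real.exp_sub, Real.exp_log hDm, hsqrt]
    calc Pker (S k) (Q k) z w ≤ D ρm k / Real.sqrt (D ρ₁ k * D ρ₂ k) := hP
      _ = _ := hkey
      _ ≤ Real.exp ((k : ℝ) * (b + ε)) :=
          Real.exp_le_exp.mpr (mul_le_mul_of_nonneg_left hk.le hk0.le)
  · intro hconv
    have h12 : (fun j => (ρ₁ j + ρ₂ j) / 2) = (1/2 : ℝ) • ρ₁ + (1/2 : ℝ) • ρ₂ := by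
      funext j; simp [Pi.add_apply, Pi.smul_apply]; ring
    have := hconv.2 (Set.mem_univ ρ₁) (Set.mem_univ ρ₂)
      (by norm_num : (0:ℝ) ≤ 1/2) (by norm_num : (0:ℝ) ≤ 1/2) (by norm_num)
    rw [← h12] at this
    simp only [smul_eq_mul] at this
    rw [← hρm] at this
    linarith
end

section
/- Let φ : ℝ^m → ℝ be strictly convex, fix x ≠ x' in ℝ^m and y ∈ ℝ^m, and write u = (x+x')/2 and δ = φ(x)/2 + φ(x')/2 − φ(u) > 0. For each λ ∈ ℕ, λ ≥ 1, let Q_λ : ℝ^m → ℝ be measurable with Q_λ(α) > 0, suppose α ↦ exp(⟨α,u⟩)/Q_λ(α) is integrable, and define K_λ and Π_λ(z,w) = K_λ(z,w)e^{−λφ(Re z)/2}e^{−λφ(Re w)/2} as in Christ's kernel representation. Assume the diagonal subexponential asymptotics (1/λ)·log Π_λ(u+iy, u+iy) → 0 as λ → ∞. Then (1/λ)·log |Π_λ(x+iy, x'+iy)| → −δ < 0 as λ → ∞; i.e. the Szegő kernel between two points with equal imaginary parts and distinct real parts decays exponentially at speed λ with rate exactly δ. -/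
open Complex Finset MeasureTheory Filter

/-- Christ's ('non-compact toric') Bergman-type kernel
`K(x+iy, x'+iy') = ∫_{ℝ^m} exp(⟨α,(x+x')/2⟩ + i⟨α,y−y'⟩)/Q(α) dα`. -/
noncomputable def christKer {m : ℕ} (Q : (Fin m → ℝ) → ℝ)
    (x y x' y' : Fin m → ℝ) : ℂ :=
  ∫ α : Fin m → ℝ,
    Complex.exp (((∑ j, α j * ((x j + x' j) / 2) : ℝ) : ℂ)
        + ((∑ j, α j * (y j - y' j) : ℝ) : ℂ) * Complex.I) / (Q α : ℂ)

/-- The Szegő kernel of the weight `e^{−λφ}`: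
`Π_λ(z,w) = K(z,w)·e^{−λφ(Re z)/2}·e^{−λφ(Re w)/2}`. -/
noncomputable def christSzego {m : ℕ} (φ : (Fin m → ℝ) → ℝ) (Q : (Fin m → ℝ) → ℝ)
    (lam : ℝ) (x y x' y' : Fin m → ℝ) : ℂ :=
  christKer Q x y x' y' * Real.exp (-(lam * φ x) / 2) * Real.exp (-(lam * φ x') / 2)

/-- for a strictly convex potential `φ` and distinct real parts
`x ≠ x'`, with `u = (x+x')/2` and `δ = φ(x)/2 + φ(x')/2 − φ(u)`, assuming the
diagonal subexponential asymptotics `(1/λ)·log Π_λ(u+iy,u+iy) → 0`, one has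
`δ > 0` and `(1/λ)·log |Π_λ(x+iy,x'+iy)| → −δ < 0`: the Szegő kernel between two
points with equal imaginary parts and distinct real parts decays exponentially
at speed `λ` with rate exactly `δ`. -/
theorem christ_szego_exponential_decay_same_imaginary_parts
    (m : ℕ) (hm : 1 ≤ m)
    (φ : (Fin m → ℝ) → ℝ) (hφ : StrictConvexOn ℝ Set.univ φ)
    (x x' y : Fin m → ℝ) (hxx : x ≠ x')
    (Q : ℕ → (Fin m → ℝ) → ℝ)
    (hQmeas : ∀ lam : ℕ, 1 ≤ lam → Measurable (Q lam))
    (hQpos : ∀ lam : ℕ, 1 ≤ lam → ∀ α, 0 < Q lam α)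
    (hint : ∀ lam : ℕ, 1 ≤ lam → Integrable (fun α : Fin m → ℝ =>
      Real.exp (∑ j, α j * ((x j + x' j) / 2)) / Q lam α))
    (hdiag : Tendsto (fun lam : ℕ => (1 / (lam : ℝ)) * Real.log
        ((christSzego φ (Q lam) (lam : ℝ) (fun j => (x j + x' j) / 2) y
          (fun j => (x j + x' j) / 2) y).re))
      atTop (nhds 0)) :
    0 < φ x / 2 + φ x' / 2 - φ (fun j => (x j + x' j) / 2)
    ∧ Tendsto (fun lam : ℕ => (1 / (lam : ℝ)) * Real.log
        ‖christSzego φ (Q lam) (lam : ℝ) x y x' y‖)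
      atTop
      (nhds (-(φ x / 2 + φ x' / 2 - φ (fun j => (x j + x' j) / 2)))) := by

  classical
  set u : Fin m → ℝ := fun j => (x j + x' j) / 2 with hu
  have hδ : 0 < φ x / 2 + φ x' / 2 - φ u := by
    have h := hφ.2 (Set.mem_univ x) (Set.mem_univ x') hxx
      (by norm_num : (0:ℝ) < 1/2) (by norm_num : (0:ℝ) < 1/2) (by norm_num)
    have hux : (1/2 : ℝ) • x + (1/2 : ℝ) • x' = u := by
      funext j
      simp only [Pi.add_apply, Pi.smul_apply, smul_eq_mul, hu]
      ring
    rw [hux] at h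
    simp only [smul_eq_mul] at h
    linarith
  refine ⟨hδ, ?_⟩
  have key : ∀ lam : ℕ, 1 ≤ lam →
      (1 / (lam : ℝ)) * Real.log
        ((christSzego φ (Q lam) (lam : ℝ) u y u y).re)
        - (φ x / 2 + φ x' / 2 - φ u)
      = (1 / (lam : ℝ)) * Real.log
        ‖christSzego φ (Q lam) (lam : ℝ) x y x' y‖ := by
    intro lam hlam
    set Kre : ℝ := ∫ α : Fin m → ℝ,
      Real.exp (∑ j, α j * ((x j + x' j) / 2)) / Q lam α with hKre
    have hKpos : 0 < Kre := by
      rw [hKre, integral_pos_iff_support_of_nonneg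
        (fun α => le_of_lt (div_pos (Real.exp_pos _) (hQpos lam hlam α)))
        (hint lam hlam)]
      have hs : (Function.support fun α : Fin m → ℝ =>
          Real.exp (∑ j, α j * ((x j + x' j) / 2)) / Q lam α) = Set.univ :=
        Set.eq_univ_of_forall (fun α =>
          (div_pos (Real.exp_pos _) (hQpos lam hlam α)).ne')
      rw [hs]
      exact isOpen_univ.measure_pos volume Set.univ_nonempty
    have hK : christKer (Q lam) x y x' y = (Kre : ℂ) := by
      have heq : ∀ α : Fin m → ℝ,
          Complex.exp (((∑ j, α j * ((x j + x' j) / 2) : ℝ) : ℂ)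
              + ((∑ j, α j * (y j - y j) : ℝ) : ℂ) * Complex.I) / (Q lam α : ℂ)
          = ((Real.exp (∑ j, α j * ((x j + x' j) / 2)) / Q lam α : ℝ) : ℂ) := by
        intro α
        have h0 : (∑ j, α j * (y j - y j) : ℝ) = 0 := by simp
        rw [h0]
        push_cast
        norm_num
      rw [hKre, christKer]
      simp only [heq]
      exact integral_ofReal
    have hKu : christKer (Q lam) u y u y = (Kre : ℂ) := by
      have heq : ∀ α : Fin m → ℝ,
          Complex.exp (((∑ j, α j * ((u j + u j) / 2) : ℝ) : ℂ)
              + ((∑ j, α j * (y j - y j) : ℝ) : ℂ) * Complex.I) / (Q lam α : ℂ)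
          = ((Real.exp (∑ j, α j * ((x j + x' j) / 2)) / Q lam α : ℝ) : ℂ) := by
        intro α
        have h0 : (∑ j, α j * (y j - y j) : ℝ) = 0 := by simp
        have h1 : (∑ j, α j * ((u j + u j) / 2) : ℝ)
            = ∑ j, α j * ((x j + x' j) / 2) := by
          refine Finset.sum_congr rfl fun j _ => ?_
          simp only [hu]
          ring
        rw [h0, h1]
        push_cast
        norm_num
      rw [hKre, christKer]
      simp only [heq]
      exact integral_ofReal
    have hlam0 : ((lam : ℝ)) ≠ 0 := by
      have : (1:ℝ) ≤ (lam:ℝ) := by exact_mod_cast hlam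
      linarith
    have hrdiag : (christSzego φ (Q lam) (lam : ℝ) u y u y).re
        = Kre * Real.exp (-((lam:ℝ) * φ u) / 2) * Real.exp (-((lam:ℝ) * φ u) / 2) := by
      rw [christSzego, hKu, ← Complex.ofReal_mul, ← Complex.ofReal_mul,
        Complex.ofReal_re]
    have habs : ‖christSzego φ (Q lam) (lam : ℝ) x y x' y‖
        = Kre * Real.exp (-((lam:ℝ) * φ x) / 2) * Real.exp (-((lam:ℝ) * φ x') / 2) := by
      rw [christSzego, hK]
      rw [norm_mul, norm_mul]
      rw [Complex.norm_real, Complex.norm_real, Complex.norm_real, Real.norm_eq_abs, Real.norm_eq_abs, Real.norm_eq_abs]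
      rw [abs_of_pos hKpos, abs_of_pos (Real.exp_pos _), abs_of_pos (Real.exp_pos _)]
    rw [hrdiag, habs]
    rw [Real.log_mul (by positivity) (Real.exp_pos _).ne',
        Real.log_mul (by positivity) (Real.exp_pos _).ne',
        Real.log_mul (by positivity) (Real.exp_pos _).ne',
        Real.log_mul (by positivity) (Real.exp_pos _).ne',
        Real.log_exp]
    simp only [Real.log_exp]
    field_simp
    ring
  have hgoal := hdiag.sub_const (φ x / 2 + φ x' / 2 - φ u)
  rw [zero_sub] at hgoal
  refine Tendsto.congr' ?_ hgoal
  filter_upwards [eventually_ge_atTop 1] with lam hlam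
  exact key lam hlam
end
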